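/- Let φ be a continuous flow on a compact metric space with open set of fixed points. Then for every T ∈ (0, T*) for some T* > 0 there exists ξ > 0 such that d(φ_T(x), x) > ξ for every point x that is not a fixed point. -/

import Mathlib

open Set Metric

private lemma fix_of_interval' {X : Type*} [MetricSpace X]
    (φ : ℝ → X → X) (h0 : ∀ x, φ 0 x = x)
    (hadd : ∀ t s x, φ (t + s) x = φ t (φ s x))
    (x : X) (h : ∀ t ∈ Set.Icc (0:ℝ) 1, φ t x = x) : ∀ t, φ t x = x := by
  have key : ∀ n : ℕ, ∀ t : ℝ, 0 ≤ t → t ≤ n + 1 → φ t x = x := by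
    intro n
    induction n with
    | zero =>
      intro t ht0 ht1
      exact h t ⟨ht0, by simpa using ht1⟩
    | succ n ih =>
      intro t ht0 ht1
      by_cases hle : t ≤ n + 1
      · exact ih t ht0 hle
      · push_neg at hle
        have hn0 : (0:ℝ) ≤ n := Nat.cast_nonneg n
        have h1 : φ t x = φ (t - 1) (φ 1 x) := by
          rw [← hadd]; ring_nf
        have hf1 : φ 1 x = x := h 1 ⟨zero_le_one, le_refl 1⟩
        rw [h1, hf1]
        apply ih (t - 1) (by linarith) (by push_cast at ht1; linarith)
  have pos : ∀ t : ℝ, 0 ≤ t → φ t x = x := by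
    intro t ht
    obtain ⟨n, hn⟩ := exists_nat_ge t
    exact key n t ht (by push_cast; linarith)
  intro t
  rcases le_or_gt 0 t with ht | ht
  · exact pos t ht
  · have h1 : φ (-t) x = x := pos (-t) (by linarith)
    have h2 := hadd t (-t) x
    rw [h1] at h2
    have h3 : φ (t + -t) x = x := by
      rw [show t + -t = (0:ℝ) by ring, h0]
    rw [h3] at h2
    exact h2.symm

theorem stmt7 {X : Type*} [MetricSpace X] [CompactSpace X]
    (φ : ℝ → X → X)
    (hcont : Continuous fun p : ℝ × X => φ p.1 p.2)
    (h0 : ∀ x, φ 0 x = x)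
    (hadd : ∀ t s x, φ (t + s) x = φ t (φ s x))
    (hopen : IsOpen {x : X | ∀ t, φ t x = x}) :
    ∃ Tstar > (0:ℝ), ∀ T : ℝ, 0 < T → T < Tstar → ∃ ξ > (0:ℝ),
      ∀ x : X, (¬ ∀ t, φ t x = x) → ξ < dist (φ T x) x := by
  classical
  set F : Set X := {x : X | ∀ t, φ t x = x} with hF
  by_cases hKe : ∀ x : X, x ∈ F
  · exact ⟨1, one_pos, fun T hT hT1 => ⟨1, one_pos, fun x hx => absurd (hKe x) hx⟩⟩
  push_neg at hKe
  obtain ⟨x₀, hx₀⟩ := hKe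
  have hKne : (Fᶜ).Nonempty := ⟨x₀, hx₀⟩
  have hKclosed : IsClosed (Fᶜ) := hopen.isClosed_compl
  have hKcomp : IsCompact (Fᶜ) := hKclosed.isCompact
  -- each non-fixed point moves at some time in [0,1]
  have hexists : ∀ x ∈ Fᶜ, ∃ t, t ∈ Icc (0:ℝ) 1 ∧ 0 < dist (φ t x) x := by
    intro x hx
    by_contra hcon
    push_neg at hcon
    apply hx
    intro t
    refine fix_of_interval' φ h0 hadd x (fun s hs => ?_) t
    have h1 := hcon s hs
    have h2 : dist (φ s x) x = 0 := le_antisymm h1 dist_nonneg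
    exact dist_eq_zero.mp h2
  choose! τ hτmem hτpos using hexists
  -- open neighborhoods where points move a definite amount
  set V : X → Set X := fun z => {y : X | dist (φ (τ z) z) z / 2 < dist (φ (τ z) y) y}
    with hV
  have hVopen : ∀ z : X, IsOpen (V z) := by
    intro z
    have hc : Continuous fun y : X => dist (φ (τ z) y) y := by
      have h1 : Continuous fun y : X => φ (τ z) y :=
        hcont.comp (continuous_const.prodMk continuous_id)
      exact h1.dist continuous_id
    exact isOpen_lt continuous_const hc
  have hVcover : Fᶜ ⊆ ⋃ z : ↥(Fᶜ), V z := by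
    intro y hy
    exact mem_iUnion.mpr ⟨⟨y, hy⟩, by
      simp only [hV, mem_setOf_eq]
      have := hτpos y hy
      linarith⟩
  obtain ⟨s, hs⟩ := hKcomp.elim_finite_subcover (fun z : ↥(Fᶜ) => V z)
    (fun z => hVopen z) hVcover
  have hsne : s.Nonempty := by
    obtain ⟨i, hi⟩ := mem_iUnion₂.mp (hs hx₀)
    exact ⟨i, hi.1⟩
  set r : ↥(Fᶜ) → ℝ := fun z => dist (φ (τ z) (z : X)) (z : X) / 2 with hr
  set e3 : ℝ := s.inf' hsne r with he3
  have he3pos : 0 < e3 := by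
    rw [he3, Finset.lt_inf'_iff]
    intro z _
    have := hτpos z z.2
    simp only [hr]; linarith
  set ε : ℝ := e3 / 3 with hε
  have hεpos : 0 < ε := by positivity
  -- uniform estimate: every non-fixed point moves at least 3ε at some time in [0,1]
  have hmove : ∀ y ∈ Fᶜ, ∃ t, t ∈ Icc (0:ℝ) 1 ∧ 3 * ε ≤ dist (φ t y) y := by
    intro y hy
    obtain ⟨i, his, hiV⟩ := mem_iUnion₂.mp (hs hy)
    refine ⟨τ i, hτmem i i.2, ?_⟩
    have h1 : e3 ≤ r i := Finset.inf'_le r his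
    have h2 : r i < dist (φ (τ i) y) y := hiV
    have : 3 * ε = e3 := by rw [hε]; ring
    linarith
  -- uniform continuity on [0,2] × X
  have : CompactSpace (Icc (0:ℝ) 2) := isCompact_iff_compactSpace.mp isCompact_Icc
  set Φ : Icc (0:ℝ) 2 × X → X := fun p => φ (p.1 : ℝ) p.2 with hΦ
  have hΦcont : Continuous Φ :=
    hcont.comp ((continuous_subtype_val.comp continuous_fst).prodMk continuous_snd)
  have hΦuc : UniformContinuous Φ := CompactSpace.uniformContinuous_of_continuous hΦcont
  rw [Metric.uniformContinuous_iff] at hΦuc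
  obtain ⟨δ₁, hδ₁pos, hδ₁⟩ := hΦuc ε hεpos
  refine ⟨min δ₁ 1, lt_min hδ₁pos one_pos, fun T hT hTlt => ?_⟩
  have hT1 : T < 1 := lt_of_lt_of_le hTlt (min_le_right _ _)
  have hTδ₁ : T < δ₁ := lt_of_lt_of_le hTlt (min_le_left _ _)
  set n : ℕ := ⌈1 / T⌉₊ with hn
  have hnpos : 0 < n := Nat.ceil_pos.mpr (by positivity)
  have hnT2 : (n : ℝ) * T ≤ 2 := by
    have h1 : (n : ℝ) < 1 / T + 1 := Nat.ceil_lt_add_one (by positivity)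
    have h2 : (n : ℝ) * T < (1 / T + 1) * T := by
      apply mul_lt_mul_of_pos_right h1 hT
    have h3 : (1 / T + 1) * T = 1 + T := by field_simp
    linarith
  set η : ℝ := ε / n with hη
  have hηpos : 0 < η := by positivity
  obtain ⟨δ₂, hδ₂pos, hδ₂⟩ := hΦuc η hηpos
  refine ⟨min δ₂ η / 2, by positivity, fun x hx => ?_⟩
  by_contra hcontra
  push_neg at hcontra
  have hxK : x ∈ Fᶜ := hx
  have hdT : dist (φ T x) x ≤ min δ₂ η / 2 := hcontra
  -- iteration: dist (φ (j*T) x) x ≤ j * η for j ≤ n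
  have hiter : ∀ j : ℕ, j ≤ n → dist (φ ((j : ℝ) * T) x) x ≤ (j : ℝ) * η := by
    intro j
    induction j with
    | zero => intro _; simp [h0]
    | succ j ih =>
      intro hjn
      have hj : j ≤ n := Nat.le_of_succ_le hjn
      have hjT2 : (j : ℝ) * T ∈ Icc (0:ℝ) 2 := by
        constructor
        · positivity
        · have : (j : ℝ) ≤ n := Nat.cast_le.mpr hj
          nlinarith
      have hsplit : φ (((j:ℕ)+1 : ℝ) * T) x = φ ((j : ℝ) * T) (φ T x) := by
        rw [← hadd]; ring_nf
      have hstep : dist (φ ((j : ℝ) * T) (φ T x)) (φ ((j : ℝ) * T) x) < η := by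
        have := hδ₂ (a := (⟨(j : ℝ) * T, hjT2⟩, φ T x)) (b := (⟨(j : ℝ) * T, hjT2⟩, x))
        apply this
        rw [Prod.dist_eq]
        simp only [Subtype.dist_eq, dist_self]
        have : dist (φ T x) x < δ₂ := by
          have h1 : min δ₂ η ≤ δ₂ := min_le_left _ _
          linarith
        simpa [max_lt_iff] using this
      have hIH := ih hj
      have htri := dist_triangle (φ ((j : ℝ) * T) (φ T x)) (φ ((j : ℝ) * T) x) x
      push_cast
      push_cast at hsplit
      rw [hsplit]
      push_cast at hIH ⊢
      linarith
  -- get the moving time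
  obtain ⟨t, htmem, htmove⟩ := hmove x hxK
  set k : ℕ := ⌈t / T⌉₊ with hk
  have hkn : k ≤ n := Nat.ceil_le_ceil (by
    exact (div_le_div_iff_of_pos_right hT).mpr htmem.2)
  have hkT_ge : t ≤ (k : ℝ) * T := by
    have h1 : t / T ≤ (k : ℝ) := Nat.le_ceil (t / T)
    calc t = (t / T) * T := by field_simp
    _ ≤ (k : ℝ) * T := mul_le_mul_of_nonneg_right h1 hT.le
  have hkT_lt : (k : ℝ) * T < t + T := by
    have h1 : (k : ℝ) < t / T + 1 := Nat.ceil_lt_add_one (div_nonneg htmem.1 hT.le)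
    have h2 : (k : ℝ) * T < (t / T + 1) * T := mul_lt_mul_of_pos_right h1 hT
    have h3 : (t / T + 1) * T = t + T := by field_simp
    linarith
  have hkT2 : (k : ℝ) * T ∈ Icc (0:ℝ) 2 := by
    constructor
    · positivity
    · have : (k : ℝ) ≤ n := Nat.cast_le.mpr hkn
      nlinarith
  have ht2 : t ∈ Icc (0:ℝ) 2 := ⟨htmem.1, by linarith [htmem.2]⟩
  have hclose : dist (φ ((k : ℝ) * T) x) (φ t x) < ε := by
    have := hδ₁ (a := (⟨(k : ℝ) * T, hkT2⟩, x)) (b := (⟨t, ht2⟩, x))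
    apply this
    rw [Prod.dist_eq]
    simp only [Subtype.dist_eq, dist_self]
    have habs : dist ((k : ℝ) * T) t < δ₁ := by
      rw [Real.dist_eq, abs_of_nonneg (by linarith)]
      linarith
    simpa [max_lt_iff] using habs
  have hiterk : dist (φ ((k : ℝ) * T) x) x ≤ (k : ℝ) * η := hiter k hkn
  have hkη : (k : ℝ) * η ≤ ε := by
    have h1 : (k : ℝ) * η ≤ (n : ℝ) * η :=
      mul_le_mul_of_nonneg_right (Nat.cast_le.mpr hkn) hηpos.le
    have h2 : (n : ℝ) * η = ε := by
      rw [hη]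
      field_simp
    linarith
  have hclose' : dist (φ t x) (φ ((k : ℝ) * T) x) < ε := by
    rw [dist_comm]; exact hclose
  have htri := dist_triangle (φ t x) (φ ((k : ℝ) * T) x) x
  linarith
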